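/- For 0 < γ < 1, integers N ≥ 2 and 1 ≤ i ≤ 2N-1 (with i ≥ 2), one has 4((i/2)^{3-γ} - (i/2 - 1)^{3-γ}) - (3-γ)(3(i/2)^{2-γ} + (i/2-1)^{2-γ}) + (3-γ)(2-γ)(i/2)^{1-γ} ≥ (1/6)(3-γ)(2-γ)(1-γ)²(i/2)^{-γ}. -/

import Mathlib

open Real intervalIntegral

set_option maxHeartbeats 1000000

private lemma rpow_split (b γ : ℝ) (hb : 0 < b) (k : ℕ) :
    b ^ ((k : ℝ) - γ) = b ^ k * b ^ (-γ) := by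
  rw [sub_eq_add_neg, Real.rpow_add hb, Real.rpow_natCast]

private lemma hasDerivAt_B (x s c : ℝ) (h : x - s ≠ 0) (hc : c + 1 ≠ 0) :
    HasDerivAt (fun t : ℝ => -((x - t) ^ (c + 1)) / (c + 1)) ((x - s) ^ c) s := by
  have h1 : HasDerivAt (fun t : ℝ => x - t) (0 - 1) s :=
    (hasDerivAt_const s x).sub (hasDerivAt_id s)
  have h2 : HasDerivAt (fun t : ℝ => (x - t) ^ (c + 1))
      (((c + 1) * (x - s) ^ (c + 1 - 1)) * (0 - 1)) s :=
    (Real.hasDerivAt_rpow_const (Or.inl h)).comp s h1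
  have h3 := (h2.neg).div_const (c + 1)
  have hval : -(((c + 1) * (x - s) ^ (c + 1 - 1)) * (0 - 1)) / (c + 1) = (x - s) ^ c := by
    rw [show c + 1 - 1 = c by ring]
    field_simp
    ring
  rw [hval] at h3
  exact h3

private lemma key (γ x : ℝ) (hγ0 : 0 < γ) (hγ1 : γ < 1) (hx : 1 < x) :
    (1/6) * (3 - γ) * (2 - γ) * (1 - γ) ^ 2 * x ^ (-γ)
      ≤ 4 * (x ^ (3 - γ) - (x - 1) ^ (3 - γ))
        - (3 - γ) * (3 * x ^ (2 - γ) + (x - 1) ^ (2 - γ))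
        + (3 - γ) * (2 - γ) * x ^ (1 - γ) := by
  have hx0 : (0:ℝ) < x := by linarith
  have hy0 : (0:ℝ) < x - 1 := by linarith
  have hpos : ∀ s ∈ Set.uIcc (0:ℝ) 1, (0:ℝ) < x - s := by
    intro s hs
    rw [Set.uIcc_of_le (by norm_num : (0:ℝ) ≤ 1)] at hs
    have := hs.2; linarith
  have hcont : ∀ c : ℝ, ContinuousOn (fun s : ℝ => (x - s) ^ c) (Set.uIcc 0 1) := by
    intro c
    exact (continuousOn_const.sub continuousOn_id).rpow_const
      (fun a ha => Or.inl (ne_of_gt (hpos a ha)))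
  -- Part 1 : lower bound for the integral
  set Φ : ℝ → ℝ := fun s => ((1-s)^2 * (4*s - 1 + γ*(1 + 2*s)) / 6) * (x - s) ^ (-γ) with hΦdef
  set Φd : ℝ → ℝ := fun s => (1-s) * (1 - 2*s - γ*s) * (x - s) ^ (-γ)
      + ((1-s)^2 * (4*s - 1 + γ*(1 + 2*s)) / 6) * (γ * (x - s) ^ (-γ - 1)) with hΦd
  have hΦderiv : ∀ s ∈ Set.uIcc (0:ℝ) 1, HasDerivAt Φ (Φd s) s := by
    intro s hs
    have hv := hpos s hs
    have hu : HasDerivAt (fun s : ℝ => (1-s)^2 * (4*s - 1 + γ*(1 + 2*s)) / 6)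
        ((1-s) * (1 - 2*s - γ*s)) s := by
      have h1 : HasDerivAt (fun s : ℝ => (1:ℝ) - s) (0 - 1) s :=
        (hasDerivAt_const s (1:ℝ)).sub (hasDerivAt_id s)
      have h2 : HasDerivAt (fun s : ℝ => ((1:ℝ)-s)^2) ((2:ℕ) * (1-s)^(2-1) * (0-1)) s := h1.pow 2
      have h4 : HasDerivAt (fun s : ℝ => 4*s - 1 + γ*(1 + 2*s))
          ((4*1 - 0) + γ*(0 + 2*1)) s := by
        exact ((((hasDerivAt_id s).const_mul 4).sub (hasDerivAt_const s 1)).add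
          ((((hasDerivAt_const s (1:ℝ)).add ((hasDerivAt_id s).const_mul 2))).const_mul γ))
      have h5 := (h2.mul h4).div_const 6
      refine h5.congr_deriv ?_
      push_cast
      ring
    have hw : HasDerivAt (fun s : ℝ => (x - s) ^ (-γ)) (γ * (x - s) ^ (-γ - 1)) s := by
      have h1 : HasDerivAt (fun t : ℝ => x - t) (0 - 1) s :=
        (hasDerivAt_const s x).sub (hasDerivAt_id s)
      have h2 : HasDerivAt (fun t : ℝ => (x - t) ^ (-γ))
          ((-γ * (x - s) ^ (-γ - 1)) * (0 - 1)) s :=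
        (Real.hasDerivAt_rpow_const (Or.inl (ne_of_gt hv))).comp s h1
      convert h2 using 1; ring
    have h6 := hu.mul hw
    have heq : (1-s) * (1 - 2*s - γ*s) * (x - s) ^ (-γ)
        + ((1-s)^2 * (4*s - 1 + γ*(1 + 2*s)) / 6) * (γ * (x - s) ^ (-γ - 1)) = Φd s := rfl
    rw [← heq]
    exact h6
  have hpoly1 : Continuous (fun s : ℝ => (1-s) * (1 - 2*s - γ*s)) := by fun_prop
  have hpoly2 : Continuous (fun s : ℝ => (1-s)^2 * (4*s - 1 + γ*(1 + 2*s)) / 6) := by fun_prop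
  have hpoly3 : Continuous (fun s : ℝ => (1-s) * (1 - 2*s)) := by fun_prop
  have hΦdint : IntervalIntegrable Φd MeasureTheory.volume 0 1 := by
    apply ContinuousOn.intervalIntegrable
    exact (hpoly1.continuousOn.mul (hcont (-γ))).add
      (hpoly2.continuousOn.mul (continuousOn_const.mul (hcont (-γ - 1))))
  have hFTC1 : ∫ s in (0:ℝ)..1, Φd s = Φ 1 - Φ 0 :=
    integral_eq_sub_of_hasDerivAt hΦderiv hΦdint
  have hΦval : Φ 1 - Φ 0 = (1 - γ) * x ^ (-γ) / 6 := by
    simp only [hΦdef]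
    norm_num
    ring
  set g : ℝ → ℝ := fun s => (1-s) * (1 - 2*s) * (x - s) ^ (-γ) with hgdef
  have hgint : IntervalIntegrable g MeasureTheory.volume 0 1 := by
    apply ContinuousOn.intervalIntegrable
    exact hpoly3.continuousOn.mul (hcont (-γ))
  have hptwise : ∀ s ∈ Set.Icc (0:ℝ) 1, Φd s ≤ g s := by
    intro s hs
    have hs0 : (0:ℝ) ≤ s := hs.1
    have hs1 : s ≤ 1 := hs.2
    have hv : (0:ℝ) < x - s := by linarith
    have hR : (0:ℝ) < (x - s) ^ (-γ - 1) := Real.rpow_pos_of_pos hv _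
    have hsplit : (x - s) ^ (-γ) = (x - s) ^ (-γ - 1) * (x - s) := by
      have h := (Real.rpow_add_one (ne_of_gt hv) (-γ - 1)).symm
      rw [show -γ - 1 + 1 = -γ by ring] at h
      exact h.symm
    simp only [hΦd, hgdef, hsplit]
    have h1 : (1-s)^2 * (4*s - 1 + γ*(1 + 2*s)) ≤ 6 * (s * (1-s) * (x - s)) := by
      nlinarith [sq_nonneg (1-s), mul_nonneg hs0 (sq_nonneg (1-s)),
        mul_nonneg (mul_nonneg hs0 (by linarith : (0:ℝ) ≤ 1 - s)) (by linarith : (0:ℝ) ≤ x - 1)]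
    nlinarith [mul_le_mul_of_nonneg_right h1 (le_of_lt hR),
      mul_pos (mul_pos hγ0 hR) hv, mul_le_mul_of_nonneg_left
        (mul_le_mul_of_nonneg_right h1 (le_of_lt hR)) (le_of_lt hγ0)]
  have hmono : (1 - γ) * x ^ (-γ) / 6 ≤ ∫ s in (0:ℝ)..1, g s := by
    rw [← hΦval, ← hFTC1]
    exact integral_mono_on (by norm_num) hΦdint hgint hptwise
  -- Part 2 : closed form of the integral
  set A : ℝ → ℝ := fun t => 2 * (-((x - t) ^ ((2 - γ) + 1)) / ((2 - γ) + 1))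
      - (4*x - 3) * (-((x - t) ^ ((1 - γ) + 1)) / ((1 - γ) + 1))
      + (x - 1) * (2*x - 1) * (-((x - t) ^ ((-γ) + 1)) / ((-γ) + 1)) with hAdef
  have hAderiv : ∀ s ∈ Set.uIcc (0:ℝ) 1, HasDerivAt A (g s) s := by
    intro s hs
    have hv := hpos s hs
    have h2 := (hasDerivAt_B x s (2 - γ) (ne_of_gt hv)
      (by intro hcon; linarith)).const_mul (2:ℝ)
    have h1 := (hasDerivAt_B x s (1 - γ) (ne_of_gt hv)
      (by intro hcon; linarith)).const_mul (4*x - 3)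
    have h0 := (hasDerivAt_B x s (-γ) (ne_of_gt hv)
      (by intro hcon; linarith)).const_mul ((x - 1) * (2*x - 1))
    have h6 := (h2.sub h1).add h0
    refine h6.congr_deriv ?_
    have e2 : (x - s) ^ (2 - γ) = (x - s)^2 * (x - s) ^ (-γ) := by
      have h := rpow_split (x - s) γ hv 2; norm_num at h; exact h
    have e1 : (x - s) ^ (1 - γ) = (x - s) * (x - s) ^ (-γ) := by
      have h := rpow_split (x - s) γ hv 1; norm_num at h; exact h
    simp only [hgdef, e2, e1]
    ring
  have hFTC2 : ∫ s in (0:ℝ)..1, g s = A 1 - A 0 :=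
    integral_eq_sub_of_hasDerivAt hAderiv hgint
  -- assemble
  have hc : (0:ℝ) < (3 - γ) * (2 - γ) * (1 - γ) :=
    mul_pos (mul_pos (by linarith) (by linarith)) (by linarith)
  have hfinal : (1 - γ) * x ^ (-γ) / 6 ≤ A 1 - A 0 := hFTC2 ▸ hmono
  have hmul := mul_le_mul_of_nonneg_left hfinal (le_of_lt hc)
  have hval : (3 - γ) * (2 - γ) * (1 - γ) * (A 1 - A 0)
      = 4 * (x ^ (3 - γ) - (x - 1) ^ (3 - γ))
        - (3 - γ) * (3 * x ^ (2 - γ) + (x - 1) ^ (2 - γ))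
        + (3 - γ) * (2 - γ) * x ^ (1 - γ) := by
    simp only [hAdef, sub_zero]
    rw [show (2 - γ) + 1 = 3 - γ by ring, show (1 - γ) + 1 = 2 - γ by ring,
        show (-γ) + 1 = 1 - γ by ring]
    have e3 : ∀ b : ℝ, 0 < b → b ^ (3 - γ) = b^3 * b ^ (-γ) := by
      intro b hb; have h := rpow_split b γ hb 3; norm_num at h; exact h
    have e2 : ∀ b : ℝ, 0 < b → b ^ (2 - γ) = b^2 * b ^ (-γ) := by
      intro b hb; have h := rpow_split b γ hb 2; norm_num at h; exact h
    have e1 : ∀ b : ℝ, 0 < b → b ^ (1 - γ) = b * b ^ (-γ) := by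
      intro b hb; have h := rpow_split b γ hb 1; norm_num at h; exact h
    rw [e3 x hx0, e3 (x-1) hy0, e2 x hx0, e2 (x-1) hy0, e1 x hx0, e1 (x-1) hy0]
    have d3 : (3:ℝ) - γ ≠ 0 := by intro hcon; linarith
    have d2 : (2:ℝ) - γ ≠ 0 := by intro hcon; linarith
    have d1 : (1:ℝ) - γ ≠ 0 := by intro hcon; linarith
    generalize x ^ (-γ) = R
    generalize (x - 1) ^ (-γ) = S
    field_simp
    ring
  calc (1/6) * (3 - γ) * (2 - γ) * (1 - γ) ^ 2 * x ^ (-γ)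
      = (3 - γ) * (2 - γ) * (1 - γ) * ((1 - γ) * x ^ (-γ) / 6) := by ring
    _ ≤ (3 - γ) * (2 - γ) * (1 - γ) * (A 1 - A 0) := hmul
    _ = _ := hval

theorem stmt_11 (γ : ℝ) (hγ0 : 0 < γ) (hγ1 : γ < 1) (N i : ℕ) (hN : 2 ≤ N)
    (hi2 : 2 ≤ i) (hiN : i ≤ 2 * N - 1) :
    (1/6) * (3 - γ) * (2 - γ) * (1 - γ) ^ 2 * ((i : ℝ) / 2) ^ (-γ)
      ≤ 4 * (((i : ℝ) / 2) ^ (3 - γ) - ((i : ℝ) / 2 - 1) ^ (3 - γ))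
        - (3 - γ) * (3 * ((i : ℝ) / 2) ^ (2 - γ) + ((i : ℝ) / 2 - 1) ^ (2 - γ))
        + (3 - γ) * (2 - γ) * ((i : ℝ) / 2) ^ (1 - γ) := by
  rcases eq_or_lt_of_le hi2 with h2 | h3
  · have h : ((i : ℝ) / 2) = 1 := by rw [← h2]; norm_num
    rw [h]
    have z3 : ((1:ℝ) - 1) ^ (3 - γ) = 0 := by
      rw [sub_self, Real.zero_rpow (by intro hcon; linarith : (3:ℝ) - γ ≠ 0)]
    have z2 : ((1:ℝ) - 1) ^ (2 - γ) = 0 := by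
      rw [sub_self, Real.zero_rpow (by intro hcon; linarith : (2:ℝ) - γ ≠ 0)]
    rw [z3, z2, Real.one_rpow, Real.one_rpow, Real.one_rpow, Real.one_rpow]
    nlinarith [mul_nonneg (sq_nonneg (1 - γ))
      (mul_nonneg hγ0.le (by linarith : (0:ℝ) ≤ 5 - γ))]
  · have h3' : (3:ℕ) ≤ i := h3
    have hcast : (3:ℝ) ≤ (i:ℝ) := by exact_mod_cast h3'
    exact key γ ((i:ℝ)/2) hγ0 hγ1 (by linarith)
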